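/- A functor f : H ⥤ G between groupoids is an equivalence of categories if and only if the expansion p : H□ ⥤ G of its holograph is an equivalence of categories. -/

import Mathlib

open CategoryTheory

theorem stmt14 {H G : Type*} [Groupoid H] [Groupoid G] (f : H ⥤ G) :
    f.IsEquivalence ↔ (Comma.snd f (𝟭 G)).IsEquivalence := by
  -- The embedding H ⥤ Comma f (𝟭 G)
  let e : H ⥤ Comma f (𝟭 G) :=
    { obj := fun x => ⟨x, f.obj x, 𝟙 _⟩
      map := fun h => ⟨h, f.map h, by simp⟩ }
  -- Equivalence H ≌ Comma f (𝟭 G)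
  let E : H ≌ Comma f (𝟭 G) :=
    { functor := e
      inverse := Comma.fst f (𝟭 G)
      unitIso := Iso.refl _
      counitIso := NatIso.ofComponents
        (fun X => Comma.isoMk (Iso.refl _) (asIso X.hom) (by simp [e]))
        (by intro X Y g; ext <;> simp [e] <;> simpa using g.w)
      functor_unitIso_comp := by intro x; ext <;> simp [e] }
  have hfst : (Comma.fst f (𝟭 G)).IsEquivalence := E.isEquivalence_inverse
  -- snd ≅ fst ⋙ f
  let α : Comma.fst f (𝟭 G) ⋙ f ≅ Comma.snd f (𝟭 G) :=
    NatIso.ofComponents (fun X => asIso X.hom)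
      (fun g => by simpa using g.w)
  constructor
  · intro hf
    exact Functor.isEquivalence_of_iso α
  · intro hsnd
    have he : e.IsEquivalence := E.isEquivalence_functor
    have : (e ⋙ Comma.snd f (𝟭 G)).IsEquivalence := inferInstance
    have hiso : e ⋙ Comma.snd f (𝟭 G) ≅ f :=
      NatIso.ofComponents (fun x => Iso.refl _) (by simp [e])
    exact Functor.isEquivalence_of_iso hiso
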